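/- arXiv:2304.03985 — 2 statements merged into one kernel-verified Lean document; each statement's English description precedes it below -/
import Mathlib

section
/- A transposition δ_{i,j,k} is a tree transposition if and only if it is a 1-transposition (that is, j = i+1 or k = j+1). -/
/-- Full binary trees: every node is a leaf or has exactly two children.
`node l r` is an internal node with left subtree `l` and right subtree `r`. -/
inductive FBT : Type
  | leaf : FBT
  | node : FBT → FBT → FBT
  deriving DecidableEq

namespace FBT

/-- Number of internal nodes. -/
def internal : FBT → ℕ
  | leaf => 0
  | node l r => internal l + internal r + 1

/-- Height: maximum number of internal nodes on a root-to-leaf path. -/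
def height : FBT → ℕ
  | leaf => 0
  | node l r => max (height l) (height r) + 1

/-- Rank of a full binary tree (Ehrenfeucht–Haussler rank). -/
def rank : FBT → ℕ
  | leaf => 0
  | node l r => if rank l = rank r then rank l + 1 else max (rank l) (rank r)

/-- A full binary tree is skew if every internal node has at least one leaf child. -/
def skew : FBT → Prop
  | leaf => True
  | node l r => (l = leaf ∨ r = leaf) ∧ skew l ∧ skew r

/-- Pre-order traversal of the internal nodes, labeled by the in-order labeling
(1-indexed); `off` is the number of in-order labels used strictly to the left
of this subtree.  `T.preorderAux 0` is the tree permutation of `T`, as a list. -/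
def preorderAux : FBT → ℕ → List ℕ
  | leaf, _ => []
  | node l r, off =>
      (off + internal l + 1) :: (preorderAux l off ++ preorderAux r (off + internal l + 1))

/-- Number of internal nodes on the rightmost root-to-leaf path. -/
def rightPath : FBT → ℕ
  | leaf => 0
  | node _ r => rightPath r + 1

end FBT

/-- One (left or right) rotation, performed at some node of the tree. -/
inductive Rot : FBT → FBT → Prop
  | rotR (C D E : FBT) : Rot (FBT.node (FBT.node C D) E) (FBT.node C (FBT.node D E))
  | rotL (C D E : FBT) : Rot (FBT.node C (FBT.node D E)) (FBT.node (FBT.node C D) E)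
  | congrL {l l' : FBT} (r : FBT) : Rot l l' → Rot (FBT.node l r) (FBT.node l' r)
  | congrR {r r' : FBT} (l : FBT) : Rot r r' → Rot (FBT.node l r) (FBT.node l r')

/-- `RotChainP P k T1 T2`: there is a sequence of `k` rotations transforming `T1`
into `T2` in which every tree reached along the way satisfies `P`. -/
def RotChainP (P : FBT → Prop) : ℕ → FBT → FBT → Prop
  | 0, T1, T2 => T1 = T2
  | k+1, T1, T2 => ∃ T, Rot T1 T ∧ P T ∧ RotChainP P k T T2

/-- `RotChain k T1 T2`: `T1` can be transformed into `T2` by `k` rotations. -/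
def RotChain : ℕ → FBT → FBT → Prop := RotChainP fun _ => True

/-- The rotation distance between two full binary trees. -/
noncomputable def rotDist (T1 T2 : FBT) : ℕ := sInf {k | RotChain k T1 T2}

/-- The right comb on `n` internal nodes. -/
def rightComb : ℕ → FBT
  | 0 => FBT.leaf
  | n+1 => FBT.node FBT.leaf (rightComb n)

/-- The left comb on `n` internal nodes. -/
def leftComb : ℕ → FBT
  | 0 => FBT.leaf
  | n+1 => FBT.node (leftComb n) FBT.leaf

/-- The complete binary tree of height `r`. -/
def completeTree : ℕ → FBT
  | 0 => FBT.leaf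
  | r+1 => FBT.node (completeTree r) (completeTree r)

/-- Replace the leftmost leaf of the first tree by the second tree. -/
def attachLeftmost : FBT → FBT → FBT
  | FBT.leaf, S => S
  | FBT.node l r, S => FBT.node (attachLeftmost l S) r

/-- The transposition `δ_{i,j,k}` (1-indexed, `1 ≤ i < j < k`) applied to a list:
the consecutive blocks occupying positions `i..j-1` and `j..k-1` are swapped,
all other positions are left fixed. -/
def transposeList (i j k : ℕ) (l : List ℕ) : List ℕ :=
  l.take (i-1) ++ (l.drop (j-1)).take (k-j) ++ (l.drop (i-1)).take (j-i) ++ l.drop (k-1)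

/-- `δ_{i,j,k}` is a tree transposition (on permutations of `n` elements): there are
full binary trees `T1, T2` with `n` internal nodes each, at rotation distance `1`,
whose tree permutations `σ, τ` satisfy `δ_{i,j,k}(σ) = τ`. -/
def IsTreeTransposition (n i j k : ℕ) : Prop :=
  ∃ T1 T2 : FBT, T1.internal = n ∧ T2.internal = n ∧ rotDist T1 T2 = 1 ∧
    transposeList i j k (T1.preorderAux 0) = T2.preorderAux 0

/-- `σ` (a permutation of `Fin n`) is a tree permutation: the pre-order traversal of
some full binary tree with `n` internal nodes under the in-order labeling.
(Positions and values are converted to 1-indexed labels.) -/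
def IsTreePerm (n : ℕ) (σ : Equiv.Perm (Fin n)) : Prop :=
  ∃ T : FBT, T.internal = n ∧ T.preorderAux 0 = List.ofFn fun i => (σ i : ℕ) + 1

/-- `σ` is a skew permutation: the tree permutation of some full skew tree. -/
def IsSkewPerm (n : ℕ) (σ : Equiv.Perm (Fin n)) : Prop :=
  ∃ T : FBT, T.internal = n ∧ T.skew ∧ T.preorderAux 0 = List.ofFn fun i => (σ i : ℕ) + 1

/-- `SkewSim σ τ` (written `σ ∼ τ` in the paper): `τ` is obtained from `σ` (lists,
0-indexed) by a skew transposition: for some position `i`, `σ(i)` and `σ(i+1)` are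
respectively the min and the max (or the max and the min) of the suffix starting at
position `i`, and `τ` is `σ` with the entries at positions `i` and `i+1` swapped. -/
def SkewSim (σ τ : List ℕ) : Prop :=
  ∃ i : ℕ, i + 1 < σ.length ∧
    (((∀ x ∈ σ.drop i, σ.getD i 0 ≤ x) ∧ (∀ x ∈ σ.drop i, x ≤ σ.getD (i+1) 0)) ∨
     ((∀ x ∈ σ.drop i, x ≤ σ.getD i 0) ∧ (∀ x ∈ σ.drop i, σ.getD (i+1) 0 ≤ x))) ∧
    τ = σ.take i ++ [σ.getD (i+1) 0, σ.getD i 0] ++ σ.drop (i+2)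

/-- The tree polynomial of a full binary tree: the sum over all leaves of `x^a y^b`,
where `a` (resp. `b`) is the number of left (resp. right) edges on the root-to-leaf
path.  `X 0` plays the role of `x` and `X 1` the role of `y`. -/
noncomputable def treePoly : FBT → MvPolynomial (Fin 2) ℕ
  | FBT.leaf => 1
  | FBT.node l r => MvPolynomial.X 0 * treePoly l + MvPolynomial.X 1 * treePoly r
section TreeTranspositionAux

lemma FBT.len_pre : ∀ (T : FBT) (off : ℕ), (T.preorderAux off).length = T.internal
  | FBT.leaf, _ => rfl
  | FBT.node l r, off => by
      simp [FBT.preorderAux, FBT.internal, FBT.len_pre l, FBT.len_pre r]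

lemma FBT.mem_pre : ∀ (T : FBT) (off x : ℕ), x ∈ T.preorderAux off → off < x ∧ x ≤ off + T.internal
  | FBT.leaf, _, _, h => by simp [FBT.preorderAux] at h
  | FBT.node l r, off, x, h => by
      simp only [FBT.preorderAux, List.mem_cons, List.mem_append] at h
      rcases h with h | h | h
      · subst h; simp only [FBT.internal]; omega
      · have := FBT.mem_pre l off x h; simp [FBT.internal]; omega
      · have := FBT.mem_pre r _ x h; simp [FBT.internal] at this ⊢; omega

lemma FBT.nodup_pre : ∀ (T : FBT) (off : ℕ), (T.preorderAux off).Nodup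
  | FBT.leaf, _ => List.nodup_nil
  | FBT.node l r, off => by
      rw [FBT.preorderAux, List.nodup_cons, List.nodup_append]
      refine ⟨?_, FBT.nodup_pre l off, FBT.nodup_pre r _, ?_⟩
      · intro hmem
        rcases List.mem_append.1 hmem with h | h
        · have := FBT.mem_pre l off _ h; omega
        · have := FBT.mem_pre r _ _ h; omega
      · intro a ha b hb hab
        have h1 := FBT.mem_pre l off a ha
        have h2 := FBT.mem_pre r _ b hb
        omega

lemma Rot.internal_eq {T1 T2 : FBT} (h : Rot T1 T2) : T1.internal = T2.internal := by
  induction h with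
  | rotR C D E => simp [FBT.internal]; omega
  | rotL C D E => simp [FBT.internal]; omega
  | congrL r _ ih => simp [FBT.internal, ih]
  | congrR l _ ih => simp [FBT.internal, ih]

lemma Rot.ne {T1 T2 : FBT} (h : Rot T1 T2) : T1 ≠ T2 := by
  induction h with
  | rotR C D E =>
      intro h; injection h with h1 h2
      have := congrArg FBT.internal h1; simp only [FBT.internal] at this; omega
  | rotL C D E =>
      intro h; injection h with h1 h2
      have := congrArg FBT.internal h2; simp only [FBT.internal] at this; omega
  | congrL r _ ih => intro h; injection h with h1 h2; exact ih h1
  | congrR l _ ih => intro h; injection h with h1 h2; exact ih h2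

end TreeTranspositionAux
section TransLemmas

lemma trans_cons (x : ℕ) (l : List ℕ) (i j k : ℕ) (hi : 1 ≤ i) (hj : 1 ≤ j) (hk : 1 ≤ k) :
    transposeList (i+1) (j+1) (k+1) (x :: l) = x :: transposeList i j k l := by
  obtain ⟨i, rfl⟩ : ∃ i', i = i' + 1 := ⟨i - 1, by omega⟩
  obtain ⟨j, rfl⟩ : ∃ j', j = j' + 1 := ⟨j - 1, by omega⟩
  obtain ⟨k, rfl⟩ : ∃ k', k = k' + 1 := ⟨k - 1, by omega⟩
  simp only [transposeList, Nat.add_sub_cancel, Nat.add_sub_add_right,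
    List.take_succ_cons, List.drop_succ_cons, List.cons_append]

lemma trans_key_base (B S : List ℕ) (a : ℕ) :
    transposeList 1 2 (2 + B.length) (a :: (B ++ S)) = B ++ (a :: S) := by
  rw [transposeList, show (2:ℕ)+B.length-2 = B.length by omega,
    show (2:ℕ)+B.length-1 = B.length+1 by omega, show (2:ℕ)-1 = 1 by omega,
    show (1:ℕ)-1 = 0 by omega]
  simp [List.take_left, List.drop_left, List.drop_append, List.take_append]

lemma trans_key (P B S : List ℕ) (a : ℕ) :
    transposeList (P.length + 1) (P.length + 2) (P.length + 2 + B.length)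
      (P ++ a :: (B ++ S)) = P ++ (B ++ (a :: S)) := by
  induction P with
  | nil => simpa using trans_key_base B S a
  | cons x P ih =>
      simp only [List.cons_append, List.length_cons]
      rw [show P.length + 1 + 1 = (P.length + 1) + 1 from rfl,
        show P.length + 1 + 2 = (P.length + 2) + 1 by omega,
        show P.length + 1 + 2 + B.length = (P.length + 2 + B.length) + 1 by omega,
        trans_cons x _ _ _ _ (by omega) (by omega) (by omega), ih]

lemma trans_key2_base (B S : List ℕ) (a : ℕ) :
    transposeList 1 (1 + B.length) (2 + B.length) (B ++ (a :: S)) = a :: (B ++ S) := by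
  rw [transposeList, show (2:ℕ)+B.length-(1+B.length) = 1 by omega,
    show (1:ℕ)+B.length-1 = B.length by omega, show (2:ℕ)+B.length-1 = B.length+1 by omega,
    show (1:ℕ)-1 = 0 by omega]
  simp [List.take_left, List.drop_left, List.drop_append, List.take_append]

lemma trans_key2 (P B S : List ℕ) (a : ℕ) :
    transposeList (P.length + 1) (P.length + 1 + B.length) (P.length + 2 + B.length)
      (P ++ (B ++ (a :: S))) = P ++ (a :: (B ++ S)) := by
  induction P with
  | nil => simpa using trans_key2_base B S a
  | cons x P ih =>
      simp only [List.cons_append, List.length_cons]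
      rw [show P.length + 1 + 1 = (P.length + 1) + 1 from rfl,
        show P.length + 1 + 1 + B.length = (P.length + 1 + B.length) + 1 by omega,
        show P.length + 1 + 2 + B.length = (P.length + 2 + B.length) + 1 by omega,
        trans_cons x _ _ _ _ (by omega) (by omega) (by omega), ih]

lemma trans_prefix (P A : List ℕ) (i j k : ℕ) (hi : 1 ≤ i) (hj : 1 ≤ j) (hk : 1 ≤ k) :
    transposeList (i + P.length) (j + P.length) (k + P.length) (P ++ A)
      = P ++ transposeList i j k A := by
  induction P with
  | nil => simp
  | cons x P ih =>
      simp only [List.cons_append, List.length_cons]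
      rw [show i + (P.length + 1) = (i + P.length) + 1 by omega,
        show j + (P.length + 1) = (j + P.length) + 1 by omega,
        show k + (P.length + 1) = (k + P.length) + 1 by omega,
        trans_cons x _ _ _ _ (by omega) (by omega) (by omega), ih]

lemma trans_suffix (A Bs : List ℕ) (i j k : ℕ) (hi : 1 ≤ i) (hij : i ≤ j) (hjk : j ≤ k)
    (hk : k ≤ A.length + 1) :
    transposeList i j k (A ++ Bs) = transposeList i j k A ++ Bs := by
  rw [transposeList, transposeList]
  rw [List.take_append_of_le_length (by omega),
    List.drop_append_of_le_length (show j - 1 ≤ A.length by omega),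
    List.take_append_of_le_length (by simp; omega),
    List.drop_append_of_le_length (show i - 1 ≤ A.length by omega),
    List.take_append_of_le_length (by simp; omega),
    List.drop_append_of_le_length (show k - 1 ≤ A.length by omega)]
  simp

end TransLemmas
section TransUnique

variable {l : List ℕ} {i j k : ℕ}

lemma trans_len1 (h1 : i - 1 ≤ l.length) : (l.take (i-1)).length = i - 1 := by
  rw [List.length_take]; exact inf_eq_left.mpr h1

lemma trans_len2 (hj1 : 1 ≤ j) (hjk : j < k) (hk : k ≤ l.length + 1) :
    ((l.drop (j-1)).take (k-j)).length = k - j := by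
  rw [List.length_take, List.length_drop]; exact inf_eq_left.mpr (by omega)

lemma trans_len3 (hi1 : 1 ≤ i) (hij : i < j) (hj : j ≤ l.length + 1) :
    ((l.drop (i-1)).take (j-i)).length = j - i := by
  rw [List.length_take, List.length_drop]; exact inf_eq_left.mpr (by omega)

lemma trans_getElem_lt (hi : 1 ≤ i) (hij : i < j) (hjk : j < k) (hk : k ≤ l.length + 1)
    {p : ℕ} (hp : p < i - 1) :
    (transposeList i j k l)[p]? = l[p]? := by
  rw [transposeList, List.append_assoc, List.append_assoc,
    List.getElem?_append_left (by rw [trans_len1 (by omega)]; omega),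
    List.getElem?_take, if_pos hp]

lemma trans_getElem_first (hi : 1 ≤ i) (hij : i < j) (hjk : j < k) (hk : k ≤ l.length + 1) :
    (transposeList i j k l)[i-1]? = l[j-1]? := by
  rw [transposeList, List.append_assoc, List.append_assoc,
    List.getElem?_append_right (by rw [trans_len1 (by omega)]),
    trans_len1 (by omega), Nat.sub_self,
    List.getElem?_append_left (by rw [trans_len2 (by omega) hjk hk]; omega),
    List.getElem?_take, if_pos (by omega), List.getElem?_drop, Nat.add_zero]

lemma trans_getElem_last (hi : 1 ≤ i) (hij : i < j) (hjk : j < k) (hk : k ≤ l.length + 1) :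
    (transposeList i j k l)[k-2]? = l[j-2]? := by
  rw [transposeList, List.append_assoc, List.append_assoc,
    List.getElem?_append_right (by rw [trans_len1 (by omega)]; omega),
    trans_len1 (by omega),
    List.getElem?_append_right (by rw [trans_len2 (by omega) hjk hk]; omega),
    trans_len2 (by omega) hjk hk,
    List.getElem?_append_left (by rw [trans_len3 (by omega) hij (by omega)]; omega),
    List.getElem?_take, if_pos (by omega), List.getElem?_drop,
    show i - 1 + (k - 2 - (i-1) - (k-j)) = j - 2 by omega]

lemma trans_getElem_ge (hi : 1 ≤ i) (hij : i < j) (hjk : j < k) (hk : k ≤ l.length + 1)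
    {p : ℕ} (hp : k - 1 ≤ p) :
    (transposeList i j k l)[p]? = l[p]? := by
  rw [transposeList, List.append_assoc, List.append_assoc,
    List.getElem?_append_right (by rw [trans_len1 (by omega)]; omega),
    trans_len1 (by omega),
    List.getElem?_append_right (by rw [trans_len2 (by omega) hjk hk]; omega),
    trans_len2 (by omega) hjk hk,
    List.getElem?_append_right (by rw [trans_len3 (by omega) hij (by omega)]; omega),
    trans_len3 (by omega) hij (by omega), List.getElem?_drop,
    show k - 1 + (p - (i-1) - (k-j) - (j-i)) = p by omega]

lemma trans_i_le {i' j' k' : ℕ} (hn : l.Nodup)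
    (hi : 1 ≤ i) (hij : i < j) (hjk : j < k) (hk : k ≤ l.length + 1)
    (hi' : 1 ≤ i') (hij' : i' < j') (hjk' : j' < k') (hk' : k' ≤ l.length + 1)
    (h : transposeList i j k l = transposeList i' j' k' l) : i' ≤ i := by
  by_contra hc
  push_neg at hc
  have h1 : (transposeList i j k l)[i-1]? = l[j-1]? := trans_getElem_first hi hij hjk hk
  have h2 : (transposeList i' j' k' l)[i-1]? = l[i-1]? :=
    trans_getElem_lt hi' hij' hjk' hk' (by omega)
  rw [h, h2] at h1
  have := (List.getElem?_inj (show i - 1 < l.length by omega) hn).1 h1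
  omega

lemma trans_k_le {i' j' k' : ℕ} (hn : l.Nodup)
    (hi : 1 ≤ i) (hij : i < j) (hjk : j < k) (hk : k ≤ l.length + 1)
    (hi' : 1 ≤ i') (hij' : i' < j') (hjk' : j' < k') (hk' : k' ≤ l.length + 1)
    (h : transposeList i j k l = transposeList i' j' k' l) : k' ≤ k := by
  by_contra hc
  push_neg at hc
  have h1 : (transposeList i j k l)[k'-2]? = l[k'-2]? :=
    trans_getElem_ge hi hij hjk hk (by omega)
  have h2 : (transposeList i' j' k' l)[k'-2]? = l[j'-2]? :=
    trans_getElem_last hi' hij' hjk' hk'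
  rw [h, h2] at h1
  have := (List.getElem?_inj (show j' - 2 < l.length by omega) hn).1 h1
  omega

lemma trans_unique {i' j' k' : ℕ} (hn : l.Nodup)
    (hi : 1 ≤ i) (hij : i < j) (hjk : j < k) (hk : k ≤ l.length + 1)
    (hi' : 1 ≤ i') (hij' : i' < j') (hjk' : j' < k') (hk' : k' ≤ l.length + 1)
    (h : transposeList i j k l = transposeList i' j' k' l) :
    i = i' ∧ j = j' ∧ k = k' := by
  have hii : i = i' := le_antisymm
    (trans_i_le hn hi' hij' hjk' hk' hi hij hjk hk h.symm)
    (trans_i_le hn hi hij hjk hk hi' hij' hjk' hk' h)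
  have hkk : k = k' := le_antisymm
    (trans_k_le hn hi' hij' hjk' hk' hi hij hjk hk h.symm)
    (trans_k_le hn hi hij hjk hk hi' hij' hjk' hk' h)
  refine ⟨hii, ?_, hkk⟩
  have h1 : (transposeList i j k l)[i-1]? = l[j-1]? := trans_getElem_first hi hij hjk hk
  have h2 : (transposeList i' j' k' l)[i'-1]? = l[j'-1]? := trans_getElem_first hi' hij' hjk' hk'
  rw [h, hii, h2] at h1
  have := (List.getElem?_inj (show j' - 1 < l.length by omega) hn).1 h1
  omega

end TransUnique
section RotTrans

lemma rot_trans {T1 T2 : FBT} (h : Rot T1 T2) : ∀ off : ℕ,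
    ∃ i j k, 1 ≤ i ∧ i < j ∧ j < k ∧ k ≤ T1.internal + 1 ∧ (j = i + 1 ∨ k = j + 1) ∧
      transposeList i j k (T1.preorderAux off) = T2.preorderAux off := by
  induction h with
  | rotR C D E =>
      intro off
      refine ⟨1, 2, C.internal + 3, le_refl _, by omega, by omega,
        by simp only [FBT.internal]; omega, Or.inl rfl, ?_⟩
      have key := trans_key [] ((off + C.internal + 1) :: C.preorderAux off)
        (D.preorderAux (off + C.internal + 1) ++
          E.preorderAux (off + C.internal + D.internal + 2))
        (off + C.internal + D.internal + 2)
      simp only [List.nil_append, List.length_nil, List.length_cons, FBT.len_pre] at key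
      rw [show (0:ℕ) + 1 = 1 by omega, show (0:ℕ) + 2 = 2 by omega,
        show 2 + (C.internal + 1) = C.internal + 3 by omega] at key
      simp only [FBT.preorderAux, FBT.internal]
      rw [show off + (C.internal + D.internal + 1) + 1 = off + C.internal + D.internal + 2 by omega,
        show off + C.internal + 1 + D.internal + 1 = off + C.internal + D.internal + 2 by omega]
      simpa [List.append_assoc] using key
  | rotL C D E =>
      intro off
      refine ⟨1, C.internal + 2, C.internal + 3, le_refl _, by omega, by omega,
        by simp only [FBT.internal]; omega, Or.inr rfl, ?_⟩
      have key := trans_key2 [] ((off + C.internal + 1) :: C.preorderAux off)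
        (D.preorderAux (off + C.internal + 1) ++
          E.preorderAux (off + C.internal + D.internal + 2))
        (off + C.internal + D.internal + 2)
      simp only [List.nil_append, List.length_nil, List.length_cons, FBT.len_pre] at key
      rw [show (0:ℕ) + 1 = 1 by omega, show 0 + 1 + (C.internal + 1) = C.internal + 2 by omega,
        show 0 + 2 + (C.internal + 1) = C.internal + 3 by omega] at key
      simp only [FBT.preorderAux, FBT.internal]
      rw [show off + (C.internal + D.internal + 1) + 1 = off + C.internal + D.internal + 2 by omega,
        show off + C.internal + 1 + D.internal + 1 = off + C.internal + D.internal + 2 by omega]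
      simpa [List.append_assoc] using key
  | @congrL l l' r hrot ih =>
      intro off
      obtain ⟨i, j, k, h1, h2, h3, h4, h5, h6⟩ := ih off
      refine ⟨i+1, j+1, k+1, by omega, by omega, by omega,
        by simp only [FBT.internal]; omega, by omega, ?_⟩
      simp only [FBT.preorderAux]
      rw [← hrot.internal_eq,
        trans_cons _ _ _ _ _ (by omega) (by omega) (by omega),
        trans_suffix _ _ i j k (by omega) (by omega) (by omega) (by rw [FBT.len_pre]; omega),
        h6]
  | @congrR r r' l hrot ih =>
      intro off
      obtain ⟨i, j, k, h1, h2, h3, h4, h5, h6⟩ := ih (off + l.internal + 1)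
      refine ⟨i + (l.internal + 1), j + (l.internal + 1), k + (l.internal + 1),
        by omega, by omega, by omega, by simp only [FBT.internal]; omega, by omega, ?_⟩
      have key := trans_prefix ((off + l.internal + 1) :: l.preorderAux off)
        (r.preorderAux (off + l.internal + 1)) i j k (by omega) (by omega) (by omega)
      simp only [List.length_cons, FBT.len_pre] at key
      simp only [FBT.preorderAux]
      rw [← List.cons_append, key, h6, List.cons_append]
  
end RotTrans
section Construct

lemma rightComb_internal : ∀ n : ℕ, (rightComb n).internal = n
  | 0 => rfl
  | n+1 => by simp [rightComb, FBT.internal, rightComb_internal n]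

def attachRightFBT : ℕ → FBT → FBT
  | 0, S => S
  | m+1, S => FBT.node FBT.leaf (attachRightFBT m S)

lemma attachRightFBT_internal : ∀ (m : ℕ) (S : FBT),
    (attachRightFBT m S).internal = m + S.internal
  | 0, S => by simp [attachRightFBT]
  | m+1, S => by
      simp [attachRightFBT, FBT.internal, attachRightFBT_internal m S]; omega

lemma attachRightFBT_rot : ∀ (m : ℕ) {S1 S2 : FBT}, Rot S1 S2 →
    Rot (attachRightFBT m S1) (attachRightFBT m S2)
  | 0, _, _, h => h
  | m+1, _, _, h => Rot.congrR _ (attachRightFBT_rot m h)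

lemma attachRightFBT_pre : ∀ (m : ℕ) (S : FBT) (off : ℕ),
    (attachRightFBT m S).preorderAux off = List.range' (off+1) m ++ S.preorderAux (off + m)
  | 0, S, off => by simp [attachRightFBT]
  | m+1, S, off => by
      simp only [attachRightFBT, FBT.preorderAux, FBT.internal]
      rw [attachRightFBT_pre m S (off+1), List.range'_succ,
        show off + 1 + m = off + (m+1) by omega, show off + 0 + 1 = off + 1 by omega]
      simp

lemma rotDist_eq_one {T1 T2 : FBT} (h : Rot T1 T2) : rotDist T1 T2 = 1 := by
  have h1 : RotChain 1 T1 T2 := ⟨T2, h, trivial, rfl⟩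
  have hmem := Nat.sInf_mem (⟨1, h1⟩ : Set.Nonempty {k | RotChain k T1 T2})
  have hle : sInf {k | RotChain k T1 T2} ≤ 1 := Nat.sInf_le h1
  rcases Nat.lt_or_ge (sInf {k | RotChain k T1 T2}) 1 with hlt | hge
  · exfalso
    have h0 : sInf {k | RotChain k T1 T2} = 0 := by omega
    rw [h0] at hmem
    exact h.ne hmem
  · exact le_antisymm hle hge

lemma tree_trans_construct (m c e : ℕ) :
    ∃ T1 T2 : FBT, T1.internal = m + c + e + 2 ∧ T2.internal = m + c + e + 2 ∧
      rotDist T1 T2 = 1 ∧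
      transposeList (m+1) (m+2) (m+c+3) (T1.preorderAux 0) = T2.preorderAux 0 := by
  refine ⟨attachRightFBT m (FBT.node (FBT.node (rightComb c) FBT.leaf) (rightComb e)),
    attachRightFBT m (FBT.node (rightComb c) (FBT.node FBT.leaf (rightComb e))),
    by simp [attachRightFBT_internal, FBT.internal, rightComb_internal]; omega,
    by simp [attachRightFBT_internal, FBT.internal, rightComb_internal]; omega,
    rotDist_eq_one (attachRightFBT_rot m (Rot.rotR _ _ _)), ?_⟩
  rw [attachRightFBT_pre, attachRightFBT_pre, show (0:ℕ) + m = m by omega]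
  have key := trans_key (List.range' 1 m) ((m + c + 1) :: (rightComb c).preorderAux m)
    ((rightComb e).preorderAux (m+c+2)) (m+c+2)
  simp only [List.length_range', List.length_cons, FBT.len_pre, rightComb_internal] at key
  rw [show m + 2 + (c + 1) = m + c + 3 by omega] at key
  simp only [FBT.preorderAux, FBT.internal, rightComb_internal, Nat.add_zero]
  rw [show m + (c + 1) + 1 = m + c + 2 by omega,
    show m + c + 1 + 1 = m + c + 2 by omega]
  simpa [List.append_assoc] using key

lemma tree_trans_construct2 (m c e : ℕ) :
    ∃ T1 T2 : FBT, T1.internal = m + c + e + 2 ∧ T2.internal = m + c + e + 2 ∧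
      rotDist T1 T2 = 1 ∧
      transposeList (m+1) (m+c+2) (m+c+3) (T1.preorderAux 0) = T2.preorderAux 0 := by
  refine ⟨attachRightFBT m (FBT.node (rightComb c) (FBT.node FBT.leaf (rightComb e))),
    attachRightFBT m (FBT.node (FBT.node (rightComb c) FBT.leaf) (rightComb e)),
    by simp [attachRightFBT_internal, FBT.internal, rightComb_internal]; omega,
    by simp [attachRightFBT_internal, FBT.internal, rightComb_internal]; omega,
    rotDist_eq_one (attachRightFBT_rot m (Rot.rotL _ _ _)), ?_⟩
  rw [attachRightFBT_pre, attachRightFBT_pre, show (0:ℕ) + m = m by omega]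
  have key := trans_key2 (List.range' 1 m) ((m + c + 1) :: (rightComb c).preorderAux m)
    ((rightComb e).preorderAux (m+c+2)) (m+c+2)
  simp only [List.length_range', List.length_cons, FBT.len_pre, rightComb_internal] at key
  rw [show m + 1 + (c + 1) = m + c + 2 by omega,
    show m + 2 + (c + 1) = m + c + 3 by omega] at key
  simp only [FBT.preorderAux, FBT.internal, rightComb_internal, Nat.add_zero]
  rw [show m + (c + 1) + 1 = m + c + 2 by omega,
    show m + c + 1 + 1 = m + c + 2 by omega]
  simpa [List.append_assoc] using key

end Construct

/-- a transposition `δ_{i,j,k}` is a tree transposition iff it is a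
1-transposition, i.e. `j = i+1` or `k = j+1`. -/
theorem tree_transposition_iff_one_transposition (n i j k : ℕ)
    (hi : 1 ≤ i) (hij : i < j) (hjk : j < k) (hk : k ≤ n + 1) :
    IsTreeTransposition n i j k ↔ (j = i + 1 ∨ k = j + 1) := by
  constructor
  · rintro ⟨T1, T2, h1n, h2n, hdist, heq⟩
    have hrot : Rot T1 T2 := by
      have hne : {m | RotChain m T1 T2}.Nonempty := by
        by_contra hemp
        rw [Set.not_nonempty_iff_eq_empty] at hemp
        have h0 : rotDist T1 T2 = 0 := by unfold rotDist; rw [hemp]; exact Nat.sInf_empty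
        omega
      have hmem := Nat.sInf_mem hne
      have hch : RotChain (rotDist T1 T2) T1 T2 := hmem
      rw [hdist] at hch
      obtain ⟨T, hT, -, hTe⟩ := hch
      exact hTe ▸ hT
    obtain ⟨i', j', k', g1, g2, g3, g4, g5, g6⟩ := rot_trans hrot 0
    have hlen : (T1.preorderAux 0).length = n := by rw [FBT.len_pre, h1n]
    obtain ⟨e1, e2, e3⟩ := trans_unique (FBT.nodup_pre T1 0) hi hij hjk
      (by rw [hlen]; exact hk) g1 g2 g3 (by rw [FBT.len_pre]; exact g4)
      (heq.trans g6.symm)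
    omega
  · intro hcase
    rcases hcase with hj | hk1
    · have key := tree_trans_construct (i-1) (k-i-2) (n+1-k)
      rw [show i - 1 + 1 = i by omega, show i - 1 + 2 = j by omega,
        show i - 1 + (k - i - 2) + 3 = k by omega,
        show i - 1 + (k - i - 2) + (n + 1 - k) + 2 = n by omega] at key
      exact key
    · have key := tree_trans_construct2 (i-1) (j-i-1) (n-j)
      rw [show i - 1 + 1 = i by omega, show i - 1 + (j - i - 1) + 2 = j by omega,
        show i - 1 + (j - i - 1) + 3 = k by omega,
        show i - 1 + (j - i - 1) + (n - j) + 2 = n by omega] at key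
      exact key
end

section
/- Let T1 and T2 be full skew trees with n internal nodes each, with tree permutations σ and τ respectively. Then the rotation distance d(T1, T2) = 1 if and only if σ ∼ τ (τ is obtained from σ by a skew transposition). -/
section Aux

open FBT

lemma aux_internal_eq_zero {T : FBT} (h : T.internal = 0) : T = .leaf := by
  cases T with
  | leaf => rfl
  | node l r => simp [FBT.internal] at h

lemma aux_length_preorderAux (T : FBT) (off : ℕ) :
    (T.preorderAux off).length = T.internal := by
  induction T generalizing off with
  | leaf => rfl
  | node l r ihl ihr =>
    simp [FBT.preorderAux, FBT.internal, ihl, ihr]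
    try omega

lemma aux_mem_preorderAux_bounds {T : FBT} {off x : ℕ} (h : x ∈ T.preorderAux off) :
    off + 1 ≤ x ∧ x ≤ off + T.internal := by
  induction T generalizing off with
  | leaf => simp [FBT.preorderAux] at h
  | node l r ihl ihr =>
    simp only [FBT.preorderAux, List.mem_cons, List.mem_append] at h
    rcases h with h | h | h
    · simp [FBT.internal]; omega
    · have := ihl h; simp [FBT.internal]; omega
    · have := ihr h; simp [FBT.internal]; omega

lemma aux_min_mem_preorderAux {T : FBT} (h : 1 ≤ T.internal) (off : ℕ) :
    off + 1 ∈ T.preorderAux off := by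
  induction T generalizing off with
  | leaf => simp [FBT.internal] at h
  | node l r ihl ihr =>
    simp only [FBT.preorderAux, List.mem_cons, List.mem_append]
    rcases Nat.eq_zero_or_pos l.internal with h0 | h0
    · left; omega
    · right; left; exact ihl h0 off

lemma aux_max_mem_preorderAux {T : FBT} (h : 1 ≤ T.internal) (off : ℕ) :
    off + T.internal ∈ T.preorderAux off := by
  induction T generalizing off with
  | leaf => simp [FBT.internal] at h
  | node l r ihl ihr =>
    simp only [FBT.preorderAux, List.mem_cons, List.mem_append]
    rcases Nat.eq_zero_or_pos r.internal with h0 | h0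
    · left; simp [FBT.internal]; omega
    · right; right
      have := ihr h0 (off + l.internal + 1)
      have : off + l.internal + 1 + r.internal = off + (FBT.node l r).internal := by
        simp [FBT.internal]; omega
      rw [← this]
      exact ihr h0 (off + l.internal + 1)

lemma aux_skew_struct {T : FBT} (hs : T.skew) (h : 1 ≤ T.internal) (off : ℕ) :
    (∃ r : FBT, T = .node .leaf r ∧ r.skew ∧ r.internal + 1 = T.internal ∧
       T.preorderAux off = (off + 1) :: r.preorderAux (off + 1)) ∨
    (∃ l : FBT, T = .node l .leaf ∧ l.skew ∧ l.internal + 1 = T.internal ∧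
       T.preorderAux off = (off + T.internal) :: l.preorderAux off) := by
  cases T with
  | leaf => simp [FBT.internal] at h
  | node l r =>
    obtain ⟨hlr, hl, hr⟩ := hs
    rcases hlr with rfl | rfl
    · exact Or.inl ⟨r, rfl, hr, by simp [FBT.internal],
        by simp [FBT.preorderAux, FBT.internal]⟩
    · refine Or.inr ⟨l, rfl, hl, by simp [FBT.internal], ?_⟩
      simp [FBT.preorderAux, FBT.internal]
      omega

lemma Rot.aux_internal_eq {T T' : FBT} (h : Rot T T') : T'.internal = T.internal := by
  induction h with
  | rotR C D E => simp [FBT.internal]; omega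
  | rotL C D E => simp [FBT.internal]; omega
  | congrL r _ ih => simp [FBT.internal, ih]
  | congrR l _ ih => simp [FBT.internal, ih]

/-- An auxiliary weight that is changed by every rotation. -/
def auxWt : FBT → ℕ
  | .leaf => 0
  | .node l r => auxWt l + auxWt r + l.internal

lemma Rot.aux_wt_ne {T T' : FBT} (h : Rot T T') : auxWt T' ≠ auxWt T := by
  induction h with
  | rotR C D E => simp [auxWt, FBT.internal]; omega
  | rotL C D E => simp [auxWt, FBT.internal]; omega
  | congrL r h ih => simp only [auxWt, h.aux_internal_eq]; omega
  | congrR l h ih => simp only [auxWt]; omega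

lemma Rot.aux_ne {T T' : FBT} (h : Rot T T') : T ≠ T' := by
  intro he; exact h.aux_wt_ne (by rw [he])

lemma Rot.aux_ne_leaf {T T' : FBT} (h : Rot T T') : T ≠ .leaf := by
  cases h <;> simp

lemma aux_rotDist_eq_one_iff {T1 T2 : FBT} : rotDist T1 T2 = 1 ↔ Rot T1 T2 := by
  constructor
  · intro h
    have hne : {k | RotChain k T1 T2}.Nonempty := by
      by_contra hemp
      rw [Set.not_nonempty_iff_eq_empty] at hemp
      rw [rotDist, hemp, Nat.sInf_empty] at h
      omega
    have hmem := Nat.sInf_mem hne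
    rw [rotDist] at h
    rw [h] at hmem
    have h1 : RotChain 1 T1 T2 := hmem
    obtain ⟨T, hT, -, hT2⟩ := h1
    have : T = T2 := hT2
    rwa [this] at hT
  · intro h
    have h1 : RotChain 1 T1 T2 := ⟨T2, h, trivial, rfl⟩
    have hle : rotDist T1 T2 ≤ 1 := Nat.sInf_le h1
    have h0 : rotDist T1 T2 ≠ 0 := by
      intro he
      rcases (Nat.sInf_eq_zero.mp he) with hz | hz
      · have : T1 = T2 := hz
        subst this
        exact h.aux_ne rfl
      · rw [Set.eq_empty_iff_forall_notMem] at hz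
        exact hz 1 h1
    omega

lemma aux_skewSim_cons {a b : List ℕ} (x : ℕ) (h : SkewSim a b) :
    SkewSim (x :: a) (x :: b) := by
  obtain ⟨i, hi, hc, he⟩ := h
  refine ⟨i + 1, by simpa using hi, ?_, ?_⟩
  · simpa using hc
  · simp only [List.take_succ_cons, List.drop_succ_cons, List.getD_cons_succ]
    rw [he]
    simp

lemma aux_rot_skewSim {T1 T2 : FBT} (h : Rot T1 T2) :
    ∀ off : ℕ, T1.skew → T2.skew →
      SkewSim (T1.preorderAux off) (T2.preorderAux off) := by
  induction h with
  | rotR C D E =>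
    intro off hs1 hs2
    obtain ⟨h1, h2, -⟩ := hs1
    obtain ⟨h3, -, -⟩ := hs2
    have hC : C = .leaf := by
      rcases h3 with h | h
      · exact h
      · exact absurd h (by simp)
    have hE : E = .leaf := by
      rcases h1 with h | h
      · exact absurd h (by simp)
      · exact h
    subst hC hE
    refine ⟨0, ?_, Or.inr ⟨?_, ?_⟩, ?_⟩
    · rw [aux_length_preorderAux]; simp [FBT.internal]
    · intro x hx
      have := aux_mem_preorderAux_bounds hx
      simp [FBT.preorderAux, FBT.internal] at *
      omega
    · intro x hx
      have := aux_mem_preorderAux_bounds hx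
      simp [FBT.preorderAux, FBT.internal] at *
      omega
    · simp [FBT.preorderAux, FBT.internal]
      omega
  | rotL C D E =>
    intro off hs1 hs2
    obtain ⟨h1, -, -⟩ := hs1
    obtain ⟨h3, h4, -⟩ := hs2
    have hC : C = .leaf := by
      rcases h1 with h | h
      · exact h
      · exact absurd h (by simp)
    have hE : E = .leaf := by
      rcases h3 with h | h
      · exact absurd h (by simp)
      · exact h
    subst hC hE
    refine ⟨0, ?_, Or.inl ⟨?_, ?_⟩, ?_⟩
    · rw [aux_length_preorderAux]; simp [FBT.internal]
    · intro x hx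
      have := aux_mem_preorderAux_bounds hx
      simp [FBT.preorderAux, FBT.internal] at *
      omega
    · intro x hx
      have := aux_mem_preorderAux_bounds hx
      simp [FBT.preorderAux, FBT.internal] at *
      omega
    · simp [FBT.preorderAux, FBT.internal]
      omega
  | congrL r hrot ih =>
    intro off hs1 hs2
    obtain ⟨h1, hl, -⟩ := hs1
    obtain ⟨-, hl', -⟩ := hs2
    have hr : r = .leaf := by
      rcases h1 with h | h
      · exact absurd h hrot.aux_ne_leaf
      · exact h
    subst hr
    simp only [FBT.preorderAux, List.append_nil]
    rw [hrot.aux_internal_eq]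
    exact aux_skewSim_cons _ (ih off hl hl')
  | congrR l hrot ih =>
    intro off hs1 hs2
    obtain ⟨h1, -, hr⟩ := hs1
    obtain ⟨-, -, hr'⟩ := hs2
    have hl : l = .leaf := by
      rcases h1 with h | h
      · exact h
      · exact absurd h hrot.aux_ne_leaf
    subst hl
    simp only [FBT.preorderAux, FBT.internal, List.nil_append, Nat.add_zero]
    exact aux_skewSim_cons _ (ih (off + 1) hr hr')

lemma aux_skew_preorder_inj {S : FBT} : ∀ {S' : FBT} {off : ℕ}, S.skew → S'.skew →
    S'.internal = S.internal → S.preorderAux off = S'.preorderAux off → S = S' := by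
  induction S with
  | leaf =>
    intro S' off _ _ hi _
    exact (aux_internal_eq_zero (by rw [hi]; rfl)).symm
  | node l r ihl ihr =>
    intro S' off hs hs' hi hp
    cases S' with
    | leaf => exact absurd hi.symm (by simp [FBT.internal])
    | node l' r' =>
      obtain ⟨hlr, hl, hr⟩ := hs
      obtain ⟨hlr', hl', hr'⟩ := hs'
      simp only [FBT.preorderAux, List.cons.injEq] at hp
      simp only [FBT.internal] at hi
      rcases hlr with rfl | rfl <;> rcases hlr' with rfl | rfl
      · -- node leaf r, node leaf r'
        simp only [FBT.internal, FBT.preorderAux, List.nil_append] at hp hi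
        have := ihr (off := off + 1) hr hr' (by omega) (by
          simpa using hp.2)
        rw [this]
      · -- node leaf r, node l' leaf
        simp only [FBT.internal, FBT.preorderAux] at hp hi
        have hL : l'.internal = 0 := by omega
        have hR : r.internal = 0 := by omega
        rw [aux_internal_eq_zero hL, aux_internal_eq_zero hR]
      · -- node l leaf, node leaf r'
        simp only [FBT.internal, FBT.preorderAux] at hp hi
        have hL : l.internal = 0 := by omega
        have hR : r'.internal = 0 := by omega
        rw [aux_internal_eq_zero hL, aux_internal_eq_zero hR]
      · -- node l leaf, node l' leaf
        simp only [FBT.internal, FBT.preorderAux, List.append_nil] at hp hi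
        have := ihl (off := off) hl hl' (by omega) hp.2
        rw [this]

lemma aux_descend (i : ℕ) : ∀ (T : FBT) (off : ℕ), T.skew →
    i + 1 < (T.preorderAux off).length →
    ∃ (S : FBT) (off' : ℕ), S.skew ∧ 2 ≤ S.internal ∧
      S.preorderAux off' = (T.preorderAux off).drop i ∧
      ∀ S' : FBT, S'.skew → Rot S S' →
        ∃ T' : FBT, T'.skew ∧ Rot T T' ∧
          T'.preorderAux off = (T.preorderAux off).take i ++ S'.preorderAux off' := by
  induction i with
  | zero =>
    intro T off hs hlen
    rw [aux_length_preorderAux] at hlen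
    exact ⟨T, off, hs, by omega, by simp, fun S' hs' hr => ⟨S', hs', hr, by simp⟩⟩
  | succ i ih =>
    intro T off hs hlen
    have h1 : 1 ≤ T.internal := by rw [← aux_length_preorderAux T off]; omega
    rcases aux_skew_struct hs h1 off with ⟨r, rfl, hr, hri, hpre⟩ |
      ⟨l, rfl, hl, hli, hpre⟩
    · have hlen' : i + 1 < (r.preorderAux (off + 1)).length := by
        rw [hpre] at hlen
        simp only [List.length_cons] at hlen
        omega
      obtain ⟨S, off', hS, hS2, hSp, hall⟩ := ih r (off + 1) hr hlen'
      refine ⟨S, off', hS, hS2, ?_, ?_⟩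
      · rw [hpre, List.drop_succ_cons, hSp]
      · intro S' hs' hrot
        obtain ⟨T'', hT''s, hT''rot, hT''p⟩ := hall S' hs' hrot
        refine ⟨.node .leaf T'', ⟨Or.inl rfl, trivial, hT''s⟩, Rot.congrR _ hT''rot, ?_⟩
        rw [hpre, List.take_succ_cons]
        simp only [FBT.preorderAux, FBT.internal, List.nil_append, Nat.add_zero]
        rw [hT''p]
        simp
    · have hlen' : i + 1 < (l.preorderAux off).length := by
        rw [hpre] at hlen
        simp only [List.length_cons] at hlen
        omega
      obtain ⟨S, off', hS, hS2, hSp, hall⟩ := ih l off hl hlen'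
      refine ⟨S, off', hS, hS2, ?_, ?_⟩
      · rw [hpre, List.drop_succ_cons, hSp]
      · intro S' hs' hrot
        obtain ⟨T'', hT''s, hT''rot, hT''p⟩ := hall S' hs' hrot
        refine ⟨.node T'' .leaf, ⟨Or.inr rfl, hT''s, trivial⟩, Rot.congrL _ hT''rot, ?_⟩
        rw [hpre, List.take_succ_cons]
        simp only [FBT.preorderAux, FBT.internal, List.append_nil]
        rw [hT''p, hT''rot.aux_internal_eq]
        simp
        omega

lemma aux_skew_step_min_max {S : FBT} {off a b : ℕ} {rest : List ℕ} (hs : S.skew)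
    (hp : S.preorderAux off = a :: b :: rest)
    (hmin : ∀ x ∈ a :: b :: rest, a ≤ x) (hmax : ∀ x ∈ a :: b :: rest, x ≤ b) :
    ∃ S' : FBT, S'.skew ∧ Rot S S' ∧ S'.preorderAux off = b :: a :: rest := by
  have hlen : S.internal = rest.length + 2 := by
    have h := aux_length_preorderAux S off
    rw [hp] at h
    simp at h
    omega
  have h1 : 1 ≤ S.internal := by omega
  rcases aux_skew_struct hs h1 off with ⟨r, rfl, hr, hri, hpre⟩ | ⟨l, rfl, hl, hli, hpre⟩
  · rw [hp] at hpre
    obtain ⟨ha, htail⟩ : a = off + 1 ∧ b :: rest = r.preorderAux (off + 1) := by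
      rw [List.cons.injEq] at hpre
      exact ⟨hpre.1, hpre.2⟩
    have hr1 : 1 ≤ r.internal := by omega
    -- b is the head of r's preorder and must be the max, off + 1 + r.internal
    have hbmax : off + 1 + r.internal ≤ b := by
      have hm : off + 1 + r.internal ∈ b :: rest := by
        rw [htail]; exact aux_max_mem_preorderAux hr1 (off + 1)
      exact hmax _ (List.mem_cons_of_mem _ hm)
    rcases aux_skew_struct hr hr1 (off + 1) with ⟨r2, rfl, hr2, hr2i, hpre2⟩ |
      ⟨D, rfl, hD, hDi, hpre2⟩
    · -- r = node leaf r2 : head is off + 2, forces r2 = leaf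
      rw [← htail] at hpre2
      obtain ⟨hb, htail2⟩ : b = off + 1 + 1 ∧ rest = r2.preorderAux (off + 1 + 1) := by
        rw [List.cons.injEq] at hpre2
        exact ⟨hpre2.1, hpre2.2⟩
      have hr2z : r2.internal = 0 := by
        simp only [FBT.internal] at hbmax ⊢
        omega
      have hr2l : r2 = .leaf := aux_internal_eq_zero hr2z
      subst hr2l
      refine ⟨.node (.node .leaf .leaf) .leaf,
        (by simp [FBT.skew]), Rot.rotL _ _ _, ?_⟩
      have hrest : rest = [] := by rw [htail2]; rfl
      subst hrest
      simp [FBT.preorderAux, FBT.internal, ha, hb]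
    · -- r = node D leaf
      rw [← htail] at hpre2
      obtain ⟨hb, htail2⟩ : b = off + 1 + (FBT.node D .leaf).internal ∧
          rest = D.preorderAux (off + 1) := by
        rw [List.cons.injEq] at hpre2
        exact ⟨hpre2.1, hpre2.2⟩
      refine ⟨.node (.node .leaf D) .leaf,
        (by simp [FBT.skew, hD]), Rot.rotL _ _ _, ?_⟩
      simp only [FBT.preorderAux, FBT.internal, List.nil_append, List.append_nil,
        Nat.add_zero] at hb ⊢
      rw [htail2, ha, hb]
      simp only [List.cons.injEq, eq_self_iff_true, and_true]
      omega
  · -- S = node l leaf : head is the max, contradiction with a minimal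
    exfalso
    rw [hp] at hpre
    have ha : a = off + (FBT.node l FBT.leaf).internal := by
      rw [List.cons.injEq] at hpre
      exact hpre.1
    have hm : off + 1 ∈ a :: b :: rest := by
      rw [← hp]
      exact aux_min_mem_preorderAux h1 off
    have := hmin _ hm
    omega

lemma aux_skew_step_max_min {S : FBT} {off a b : ℕ} {rest : List ℕ} (hs : S.skew)
    (hp : S.preorderAux off = a :: b :: rest)
    (hmax : ∀ x ∈ a :: b :: rest, x ≤ a) (hmin : ∀ x ∈ a :: b :: rest, b ≤ x) :
    ∃ S' : FBT, S'.skew ∧ Rot S S' ∧ S'.preorderAux off = b :: a :: rest := by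
  have hlen : S.internal = rest.length + 2 := by
    have h := aux_length_preorderAux S off
    rw [hp] at h
    simp at h
    omega
  have h1 : 1 ≤ S.internal := by omega
  rcases aux_skew_struct hs h1 off with ⟨r, rfl, hr, hri, hpre⟩ | ⟨l, rfl, hl, hli, hpre⟩
  · -- S = node leaf r : head is off + 1, but a must be the max
    exfalso
    rw [hp] at hpre
    have ha : a = off + 1 := by
      rw [List.cons.injEq] at hpre
      exact hpre.1
    have hm : off + (FBT.node FBT.leaf r).internal ∈ a :: b :: rest := by
      rw [← hp]
      exact aux_max_mem_preorderAux h1 off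
    have := hmax _ hm
    omega
  · rw [hp] at hpre
    obtain ⟨ha, htail⟩ : a = off + (FBT.node l .leaf).internal ∧
        b :: rest = l.preorderAux off := by
      rw [List.cons.injEq] at hpre
      exact ⟨hpre.1, hpre.2⟩
    have hl1 : 1 ≤ l.internal := by
      simp only [FBT.internal] at hlen ⊢
      omega
    have hbmin : b ≤ off + 1 := by
      have hm : off + 1 ∈ b :: rest := by
        rw [htail]; exact aux_min_mem_preorderAux hl1 off
      exact hmin _ (List.mem_cons_of_mem _ hm)
    rcases aux_skew_struct hl hl1 off with ⟨D, rfl, hD, hDi, hpre2⟩ |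
      ⟨l0, rfl, hl0, hl0i, hpre2⟩
    · -- l = node leaf D
      rw [← htail] at hpre2
      obtain ⟨hb, htail2⟩ : b = off + 1 ∧ rest = D.preorderAux (off + 1) := by
        rw [List.cons.injEq] at hpre2
        exact ⟨hpre2.1, hpre2.2⟩
      refine ⟨.node .leaf (.node D .leaf),
        (by simp [FBT.skew, hD]), Rot.rotR _ _ _, ?_⟩
      simp only [FBT.preorderAux, FBT.internal, List.nil_append, List.append_nil,
        Nat.add_zero] at ha ⊢
      rw [htail2, hb, ha]
      simp only [List.cons.injEq, eq_self_iff_true, and_true]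
      exact ⟨trivial, by omega⟩
    · -- l = node l0 leaf : head is off + internal l, forces l0 = leaf
      rw [← htail] at hpre2
      obtain ⟨hb, htail2⟩ : b = off + (FBT.node l0 FBT.leaf).internal ∧
          rest = l0.preorderAux off := by
        rw [List.cons.injEq] at hpre2
        exact ⟨hpre2.1, hpre2.2⟩
      have hl0z : l0.internal = 0 := by
        simp only [FBT.internal] at hb
        omega
      have hl0l : l0 = .leaf := aux_internal_eq_zero hl0z
      subst hl0l
      refine ⟨.node .leaf (.node .leaf .leaf),
        (by simp [FBT.skew]), Rot.rotR _ _ _, ?_⟩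
      have hrest : rest = [] := by rw [htail2]; rfl
      subst hrest
      simp only [FBT.internal] at ha hb
      simp [FBT.preorderAux, FBT.internal, ha, hb]

lemma aux_getD_drop (σ : List ℕ) (i : ℕ) : σ.getD i 0 = (σ.drop i).getD 0 0 := by
  simp [List.getD_eq_getElem?_getD, List.getElem?_drop]

lemma aux_skewSim_rot {T1 T2 : FBT} (hs1 : T1.skew) (hs2 : T2.skew)
    (hi : T2.internal = T1.internal)
    (h : SkewSim (T1.preorderAux 0) (T2.preorderAux 0)) : Rot T1 T2 := by
  obtain ⟨i, hlen, hc, he⟩ := h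
  obtain ⟨S, off', hS, hS2, hSp, hall⟩ := aux_descend i T1 0 hs1 hlen
  obtain ⟨a, b, rest, habr⟩ :
      ∃ a b rest, (T1.preorderAux 0).drop i = a :: b :: rest := by
    have hdl : ((T1.preorderAux 0).drop i).length = (T1.preorderAux 0).length - i := by
      simp
    match hd : (T1.preorderAux 0).drop i with
    | [] => rw [hd] at hdl; simp at hdl; omega
    | [a] => rw [hd] at hdl; simp at hdl; omega
    | a :: b :: rest => exact ⟨a, b, rest, rfl⟩
  have hga : (T1.preorderAux 0).getD i 0 = a := by
    rw [aux_getD_drop, habr]; rfl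
  have hgb : (T1.preorderAux 0).getD (i + 1) 0 = b := by
    rw [aux_getD_drop]
    have : (T1.preorderAux 0).drop (i + 1) = b :: rest := by
      have h2 : (T1.preorderAux 0).drop (i + 1) = ((T1.preorderAux 0).drop i).drop 1 := by
        rw [List.drop_drop]
      rw [h2, habr]
      rfl
    rw [this]
    rfl
  have hd2 : (T1.preorderAux 0).drop (i + 2) = rest := by
    have h2 : (T1.preorderAux 0).drop (i + 2) = ((T1.preorderAux 0).drop i).drop 2 := by
      rw [List.drop_drop]
    rw [h2, habr]
    rfl
  rw [habr] at hSp
  rw [hga, hgb] at hc he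
  rw [hd2] at he
  have key : ∃ S' : FBT, S'.skew ∧ Rot S S' ∧ S'.preorderAux off' = b :: a :: rest := by
    rcases hc with ⟨hmin, hmax⟩ | ⟨hmax, hmin⟩
    · rw [habr] at hmin hmax
      exact aux_skew_step_min_max hS hSp hmin hmax
    · rw [habr] at hmax hmin
      exact aux_skew_step_max_min hS hSp hmax hmin
  obtain ⟨S', hS's, hS'rot, hS'p⟩ := key
  obtain ⟨T', hT's, hT'rot, hT'p⟩ := hall S' hS's hS'rot
  have hpe : T2.preorderAux 0 = T'.preorderAux 0 := by
    rw [hT'p, hS'p, he]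
    simp
  have hTi : T'.internal = T2.internal := by
    rw [hT'rot.aux_internal_eq, hi]
  have : T2 = T' := aux_skew_preorder_inj hs2 hT's hTi hpe
  rw [this]
  exact hT'rot

end Aux

/-- for full skew trees `T1` and `T2` with `n` internal nodes each,
with tree permutations `σ` and `τ`, `d(T1,T2) = 1` iff `σ ∼ τ` (a skew
transposition). -/
theorem skew_rotation_iff_skew_transposition (n : ℕ) (T1 T2 : FBT)
    (h1 : T1.internal = n) (h2 : T2.internal = n)
    (hs1 : T1.skew) (hs2 : T2.skew) :
    rotDist T1 T2 = 1 ↔ SkewSim (T1.preorderAux 0) (T2.preorderAux 0) := by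
  rw [aux_rotDist_eq_one_iff]
  constructor
  · intro h
    exact aux_rot_skewSim h 0 hs1 hs2
  · intro h
    exact aux_skewSim_rot hs1 hs2 (by rw [h1, h2]) h
end
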